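/- Let X₂ = (2A−1)·2^{k} with A, k natural numbers, k ≥ 1. Then for every natural number r ≥ 2, T_{2^r}(X₂) ≡ 1 (mod 2^{k+r+2}). -/

import Mathlib

open Polynomial Polynomial.Chebyshev

lemma cheb_T_two_mul_eval (n : ℤ) (x : ℤ) :
    (T ℤ (2 * n)).eval x = 2 * ((T ℤ n).eval x) ^ 2 - 1 := by
  have h := Polynomial.Chebyshev.T_mul_T (R := ℤ) n n
  have h2 : T ℤ (2 * n) = 2 * (T ℤ n) ^ 2 - 1 := by
    have : n + n = 2 * n := by ring
    rw [this] at h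
    simp [Polynomial.Chebyshev.T_zero] at h
    linear_combination -h
  rw [h2]; simp

/-- Let `X₂ = (2A−1)·2^k` with `A ≥ 1`, `k ≥ 1`. Then for every `r ≥ 2`,
`T_{2^r}(X₂) ≡ 1 (mod 2^{k+r+2})`. -/
theorem chebyshev_two_pow_at_X2 (A k : ℕ) (hA : 1 ≤ A) (hk : 1 ≤ k)
    (r : ℕ) (hr : 2 ≤ r) :
    (Polynomial.Chebyshev.T ℤ ((2 : ℤ) ^ r)).eval ((2 * (A : ℤ) - 1) * 2 ^ k) ≡ 1
      [ZMOD 2 ^ (k + r + 2)] := by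
  set x : ℤ := (2 * (A : ℤ) - 1) * 2 ^ k with hx
  have key : ∀ r : ℕ, 2 ≤ r →
      (2 : ℤ) ^ (k + r + 2) ∣ (T ℤ ((2 : ℤ) ^ r)).eval x - 1 := by
    intro r hr
    induction r, hr using Nat.le_induction with
    | base =>
      have h4 : ((2 : ℤ) ^ 2) = 2 * 2 := by norm_num
      rw [h4, cheb_T_two_mul_eval]
      have hT2 : (T ℤ 2).eval x = 2 * x ^ 2 - 1 := by
        rw [Polynomial.Chebyshev.T_two]; simp
      rw [hT2]
      have : 2 * (2 * x ^ 2 - 1) ^ 2 - 1 - 1 = 8 * x ^ 2 * (x ^ 2 - 1) := by ring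
      rw [this]
      have hxsq : x ^ 2 = (2 * (A : ℤ) - 1) ^ 2 * 2 ^ (2 * k) := by
        rw [hx]; ring
      have : (8 : ℤ) * x ^ 2 * (x ^ 2 - 1)
          = 2 ^ (2 * k + 3) * ((2 * (A : ℤ) - 1) ^ 2 * (x ^ 2 - 1)) := by
        rw [hxsq]; ring
      rw [this]
      exact Dvd.dvd.mul_right (pow_dvd_pow 2 (by omega)) _
    | succ n hn ih =>
      obtain ⟨t, ht⟩ := ih
      have h2n : ((2 : ℤ) ^ (n + 1)) = 2 * 2 ^ n := by ring
      rw [h2n, cheb_T_two_mul_eval]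
      have hTn : (T ℤ ((2 : ℤ) ^ n)).eval x = 1 + 2 ^ (k + n + 2) * t := by
        linarith [ht]
      rw [hTn]
      refine ⟨2 * t + 2 ^ (k + n + 2) * t ^ 2, ?_⟩
      have hpow : (2 : ℤ) ^ (k + (n + 1) + 2) = 2 ^ (k + n + 2) * 2 := by ring
      rw [hpow]; ring
  have := key r hr
  have : ((2 : ℤ) ^ (k + r + 2)) ∣ 1 - (T ℤ ((2 : ℤ) ^ r)).eval x := by
    obtain ⟨c, hc⟩ := this; exact ⟨-c, by linarith⟩
  exact Int.ModEq.symm (Int.modEq_iff_dvd.mpr (by simpa using key r hr))
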